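/- Let λ(θ) = 2π cos θ / sin²θ on the strip (θ,t) ∈ (0,π/2)×ℝ. The Gauss curvature of the conformal metric λ²(dθ² + dt²) is K(θ) = (1/4π²) · tan²θ · (tan²θ − 2). In particular K(θ) ≥ 0 if and only if θ ≥ arctan √2. -/
import Mathlib


open Real

noncomputable section

/-- The conformal factor `λ(θ) = 2π cos θ / sin² θ`. -/
def lam (θ : ℝ) : ℝ := 2 * π * Real.cos θ / Real.sin θ ^ 2

/-- The Gauss curvature of the conformal metric `λ(θ)²(dθ² + dt²)`, computed by the
formula `K = −Δ(log λ)/λ²`; since `λ` depends only on `θ`, the Euclidean Laplacian of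
`log λ` is just `(log ∘ λ)''`. -/
def gaussK (θ : ℝ) : ℝ :=
  -(deriv (deriv fun s : ℝ => Real.log (lam s)) θ) / lam θ ^ 2

lemma hasDerivAt_logLamAux {s : ℝ} (hs : s ∈ Set.Ioo (0 : ℝ) (π / 2)) :
    HasDerivAt (fun s : ℝ => Real.log (2 * π) + Real.log (Real.cos s) - 2 * Real.log (Real.sin s))
      (-Real.sin s / Real.cos s - 2 * (Real.cos s / Real.sin s)) s := by
  have hc : Real.cos s ≠ 0 := ne_of_gt (Real.cos_pos_of_mem_Ioo ⟨by linarith [hs.1, Real.pi_pos], hs.2⟩)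
  have hsin : Real.sin s ≠ 0 := ne_of_gt (Real.sin_pos_of_pos_of_lt_pi hs.1 (by linarith [hs.2, Real.pi_pos]))
  have h1 : HasDerivAt (fun s : ℝ => Real.log (Real.cos s)) (-Real.sin s / Real.cos s) s :=
    (Real.hasDerivAt_cos s).log hc
  have h2 : HasDerivAt (fun s : ℝ => Real.log (Real.sin s)) (Real.cos s / Real.sin s) s :=
    (Real.hasDerivAt_sin s).log hsin
  exact ((h1.const_add (Real.log (2 * π))).sub (h2.const_mul 2))

lemma logLam_eventuallyEq {θ : ℝ} (hθ : θ ∈ Set.Ioo (0 : ℝ) (π / 2)) :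
    (fun s : ℝ => Real.log (lam s)) =ᶠ[nhds θ]
      fun s : ℝ => Real.log (2 * π) + Real.log (Real.cos s) - 2 * Real.log (Real.sin s) := by
  filter_upwards [isOpen_Ioo.mem_nhds hθ] with s hs
  have hc : Real.cos s ≠ 0 := ne_of_gt (Real.cos_pos_of_mem_Ioo ⟨by linarith [hs.1, Real.pi_pos], hs.2⟩)
  have hsin : Real.sin s ≠ 0 := ne_of_gt (Real.sin_pos_of_pos_of_lt_pi hs.1 (by linarith [hs.2, Real.pi_pos]))
  have hπ : (2 * π : ℝ) ≠ 0 := by positivity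
  rw [lam, Real.log_div (by positivity) (by positivity), Real.log_mul hπ hc,
    Real.log_pow]
  push_cast
  ring

lemma derivLogLam_eventuallyEq {θ : ℝ} (hθ : θ ∈ Set.Ioo (0 : ℝ) (π / 2)) :
    (deriv fun s : ℝ => Real.log (lam s)) =ᶠ[nhds θ]
      fun s : ℝ => -Real.sin s / Real.cos s - 2 * (Real.cos s / Real.sin s) := by
  filter_upwards [isOpen_Ioo.mem_nhds hθ] with s hs
  have h1 : (fun s : ℝ => Real.log (lam s)) =ᶠ[nhds s]
      fun s : ℝ => Real.log (2 * π) + Real.log (Real.cos s) - 2 * Real.log (Real.sin s) :=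
    logLam_eventuallyEq hs
  rw [h1.deriv_eq, (hasDerivAt_logLamAux hs).deriv]

theorem curvature_of_conformal_strip_metric :
    ∀ θ ∈ Set.Ioo (0 : ℝ) (π / 2),
      gaussK θ = 1 / (4 * π ^ 2) * Real.tan θ ^ 2 * (Real.tan θ ^ 2 - 2) ∧
        (0 ≤ gaussK θ ↔ Real.arctan (Real.sqrt 2) ≤ θ) := by
  intro θ hθ
  have hcpos : 0 < Real.cos θ := Real.cos_pos_of_mem_Ioo ⟨by linarith [hθ.1, Real.pi_pos], hθ.2⟩
  have hspos : 0 < Real.sin θ := Real.sin_pos_of_pos_of_lt_pi hθ.1 (by linarith [hθ.2, Real.pi_pos])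
  have hc : Real.cos θ ≠ 0 := ne_of_gt hcpos
  have hs : Real.sin θ ≠ 0 := ne_of_gt hspos
  have hπ : (0:ℝ) < π := Real.pi_pos
  -- second derivative
  have hd1 : HasDerivAt (fun s : ℝ => -Real.sin s / Real.cos s)
      ((-Real.cos θ * Real.cos θ - -Real.sin θ * -Real.sin θ) / Real.cos θ ^ 2) θ :=
    ((Real.hasDerivAt_sin θ).neg).div (Real.hasDerivAt_cos θ) hc
  have hd2 : HasDerivAt (fun s : ℝ => Real.cos s / Real.sin s)
      ((-Real.sin θ * Real.sin θ - Real.cos θ * Real.cos θ) / Real.sin θ ^ 2) θ :=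
    (Real.hasDerivAt_cos θ).div (Real.hasDerivAt_sin θ) hs
  have hd : HasDerivAt (fun s : ℝ => -Real.sin s / Real.cos s - 2 * (Real.cos s / Real.sin s))
      ((-Real.cos θ * Real.cos θ - -Real.sin θ * -Real.sin θ) / Real.cos θ ^ 2
        - 2 * ((-Real.sin θ * Real.sin θ - Real.cos θ * Real.cos θ) / Real.sin θ ^ 2)) θ :=
    hd1.sub (hd2.const_mul 2)
  have hPy : Real.sin θ ^ 2 + Real.cos θ ^ 2 = 1 := Real.sin_sq_add_cos_sq θ
  have hsecond : deriv (deriv fun s : ℝ => Real.log (lam s)) θ =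
      -(1 / Real.cos θ ^ 2) + 2 / Real.sin θ ^ 2 := by
    rw [(derivLogLam_eventuallyEq hθ).deriv_eq, hd.deriv]
    field_simp
    nlinarith [hPy]
  have hK : gaussK θ = 1 / (4 * π ^ 2) * Real.tan θ ^ 2 * (Real.tan θ ^ 2 - 2) := by
    rw [gaussK, hsecond, lam, Real.tan_eq_sin_div_cos]
    field_simp
    ring
  refine ⟨hK, ?_⟩
  have htpos : 0 < Real.tan θ := Real.tan_pos_of_pos_of_lt_pi_div_two hθ.1 hθ.2
  have hsq2 : Real.sqrt 2 ^ 2 = 2 := Real.sq_sqrt (by norm_num)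
  have hq : (0:ℝ) < 1 / (4 * π ^ 2) := by positivity
  have h2 : (0 ≤ gaussK θ ↔ Real.sqrt 2 ≤ Real.tan θ) := by
    rw [hK]
    constructor
    · intro h
      by_contra hcon
      push_neg at hcon
      have hlt2 : Real.tan θ ^ 2 < 2 := by nlinarith [Real.sqrt_nonneg 2]
      have hneg : 1 / (4 * π ^ 2) * Real.tan θ ^ 2 * (Real.tan θ ^ 2 - 2) < 0 :=
        mul_neg_of_pos_of_neg (mul_pos hq (pow_pos htpos 2)) (by linarith)
      linarith
    · intro h
      have h2le : 2 ≤ Real.tan θ ^ 2 := by nlinarith [Real.sqrt_nonneg 2]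
      have := mul_nonneg (mul_nonneg hq.le (sq_nonneg (Real.tan θ)))
        (by linarith : (0:ℝ) ≤ Real.tan θ ^ 2 - 2)
      linarith
  rw [h2]
  constructor
  · intro h
    have h3 := Real.arctan_strictMono.monotone h
    rwa [Real.arctan_tan (by linarith [hθ.1]) hθ.2] at h3
  · intro h
    by_contra hcon
    push_neg at hcon
    have h3 := Real.arctan_strictMono hcon
    rw [Real.arctan_tan (by linarith [hθ.1]) hθ.2] at h3
    linarith
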